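/- Assume Dynamics Smoothness holds and that Φ_{EJ}(T) is invertible. For π ∈ ℝ^{|E|} sufficiently small, set θ = Φ_{EJ}(T)⁻¹π, and let y_θ : [0,T] → ℝⁿ be a solution of the initial-value problem ẏ(t) = F(y(t),t), y_I(0) = b_I, y_J(0) = x_J(0) + θ satisfying ‖y_θ(t) − x(t)‖ ≤ e^{Lt}‖θ‖ for all t ∈ [0,T]. Then there is a constant c independent of π such that ‖y_{θ,E}(T) − b_E − π‖ ≤ c‖θ‖²; that is, the solution of the initial-value problem with the linearized correction θ satisfies the perturbed terminal condition x_E(T) = b_E + π to within O(‖θ‖²). -/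

import Mathlib

open Set Metric

/-- **Dynamics Smoothness** for a dynamics `Fd` with spatial Jacobian `DFd`, on the tube
`{(χ,t) : t ∈ [a,b], ‖χ - x t‖ ≤ ρ}` around the trajectory `x` :
`Fd` is continuously differentiable on the tube, and `χ ↦ DFd χ t` is Lipschitz
with constant `L`, uniformly in `t`. -/
structure DynSmooth (n : ℕ) (Fd : (Fin n → ℝ) → ℝ → Fin n → ℝ)
    (DFd : (Fin n → ℝ) → ℝ → (Fin n → ℝ) →L[ℝ] (Fin n → ℝ))
    (x : ℝ → Fin n → ℝ) (a b ρ L : ℝ) : Prop where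
  contDiffOn : ContDiffOn ℝ 1 (fun p : (Fin n → ℝ) × ℝ => Fd p.1 p.2)
    {p : (Fin n → ℝ) × ℝ | p.2 ∈ Icc a b ∧ ‖p.1 - x p.2‖ ≤ ρ}
  hasFDeriv : ∀ χ t, t ∈ Icc a b → ‖χ - x t‖ ≤ ρ →
    HasFDerivAt (fun y => Fd y t) (DFd χ t) χ
  contDeriv : ContinuousOn (fun p : (Fin n → ℝ) × ℝ => DFd p.1 p.2)
    {p : (Fin n → ℝ) × ℝ | p.2 ∈ Icc a b ∧ ‖p.1 - x p.2‖ ≤ ρ}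
  lip : ∀ t χ₁ χ₂, t ∈ Icc a b → ‖χ₁ - x t‖ ≤ ρ → ‖χ₂ - x t‖ ≤ ρ →
    ‖DFd χ₁ t - DFd χ₂ t‖ ≤ L * ‖χ₁ - χ₂‖

/-- `xπ` is a solution of the boundary-value problem with switched dynamics
(`F₀` before the switch point `s`, `F₁` after), initial condition `xπ_I(0) = b_I`
and perturbed terminal condition `xπ_E(T) = b_E + π`. -/
def IsPertSol {n : ℕ} (T s : ℝ) (I E : Finset (Fin n)) (bI bE : Fin n → ℝ)
    (F₀ F₁ : (Fin n → ℝ) → ℝ → Fin n → ℝ) (π : {e // e ∈ E} → ℝ)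
    (xπ : ℝ → Fin n → ℝ) : Prop :=
  ContinuousOn xπ (Icc 0 T) ∧
  (∀ t ∈ Ico 0 s, HasDerivWithinAt xπ (F₀ (xπ t) t) (Icc 0 T) t) ∧
  (∀ t ∈ Ioc s T, HasDerivWithinAt xπ (F₁ (xπ t) t) (Icc 0 T) t) ∧
  (∀ i ∈ I, xπ 0 i = bI i) ∧
  (∀ e : {e // e ∈ E}, xπ T e.1 = bE e.1 + π e)

set_option maxHeartbeats 2000000 in
/-- the linearized correction `θ = Φ_{EJ}(T)⁻¹ π` meets the perturbed
terminal condition to within `O(‖θ‖²)`. -/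
theorem linearized_correction_terminal_condition
    {n : ℕ} (hn : 0 < n) (T s ρ L : ℝ) (hT : 0 < T) (hs : s ∈ Ioo 0 T) (hρ : 0 < ρ)
    (I E : Finset (Fin n)) (hcard : I.card + E.card = n)
    (bI bE : Fin n → ℝ)
    (F₀ F₁ : (Fin n → ℝ) → ℝ → Fin n → ℝ)
    (DF₀ DF₁ : (Fin n → ℝ) → ℝ → (Fin n → ℝ) →L[ℝ] (Fin n → ℝ))
    (x : ℝ → Fin n → ℝ)
    -- `x` solves the unperturbed boundary-value problem
    (hx : IsPertSol T s I E bI bE F₀ F₁ (0 : {e // e ∈ E} → ℝ) x)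
    -- Dynamics Smoothness on the two tubes
    (hds₀ : DynSmooth n F₀ DF₀ x 0 (s + ρ) ρ L)
    (hds₁ : DynSmooth n F₁ DF₁ x (s - ρ) T ρ L)
    -- the fundamental matrix `Φ` of the linearized dynamics along `x`
    (Φ : ℝ → (Fin n → ℝ) →L[ℝ] (Fin n → ℝ))
    (hΦc : ContinuousOn Φ (Icc 0 T))
    (hΦ0 : Φ 0 = ContinuousLinearMap.id ℝ (Fin n → ℝ))
    (hΦode : ∀ t ∈ Icc 0 T, t ≠ s → HasDerivWithinAt Φ
      ((if t < s then DF₀ (x t) t else DF₁ (x t) t).comp (Φ t)) (Icc 0 T) t)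
    -- `N = Φ_{EJ}(T)⁻¹`, where `J = Iᶜ`
    (N : Matrix {j // j ∈ Iᶜ} {e // e ∈ E} ℝ)
    (hN₁ : (LinearMap.toMatrix' (Φ T : (Fin n → ℝ) →ₗ[ℝ] Fin n → ℝ)).submatrix
        (Subtype.val : {e // e ∈ E} → Fin n) (Subtype.val : {j // j ∈ Iᶜ} → Fin n) * N = 1)
    (hN₂ : N * (LinearMap.toMatrix' (Φ T : (Fin n → ℝ) →ₗ[ℝ] Fin n → ℝ)).submatrix
        (Subtype.val : {e // e ∈ E} → Fin n) (Subtype.val : {j // j ∈ Iᶜ} → Fin n) = 1) :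
    -- for `π` sufficiently small, with `θ := Φ_{EJ}(T)⁻¹ π = N π`, the solution `y_θ` of the
    -- initial-value problem satisfies `‖y_{θ,E}(T) - b_E - π‖ ≤ c ‖θ‖²`
    ∃ c : ℝ, ∃ ε > (0 : ℝ), ∀ π : {e // e ∈ E} → ℝ, ‖π‖ ≤ ε →
      ∀ y : ℝ → Fin n → ℝ,
      -- `y = y_θ` solves the initial-value problem with initial data
      -- `y_I(0) = b_I`, `y_J(0) = x_J(0) + θ`, and satisfies `‖y - x‖ ≤ e^{Lt}‖θ‖`
      ContinuousOn y (Icc 0 T) →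
      (∀ t ∈ Ico 0 s, HasDerivWithinAt y (F₀ (y t) t) (Icc 0 T) t) →
      (∀ t ∈ Ioc s T, HasDerivWithinAt y (F₁ (y t) t) (Icc 0 T) t) →
      (∀ i ∈ I, y 0 i = bI i) →
      (∀ j : {j // j ∈ Iᶜ}, y 0 j.1 = x 0 j.1 + N.mulVec π j) →
      (∀ t ∈ Icc 0 T, ‖y t - x t‖ ≤ Real.exp (L * t) * ‖N.mulVec π‖) →
      ‖(fun e : {e // e ∈ E} => y T e.1 - bE e.1 - π e)‖ ≤ c * ‖N.mulVec π‖ ^ 2 := by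
  
  classical
  obtain ⟨hs0, hsT⟩ := hs
  obtain ⟨hxc, hx₂, hx₃, hxI, hxE⟩ := hx
  haveI : Nonempty (Fin n) := Fin.pos_iff_nonempty.mp hn
  -- the Lipschitz constant is nonnegative
  have hL : 0 ≤ L := by
    have hmem : (0:ℝ) ∈ Icc 0 (s+ρ) := ⟨le_refl 0, by linarith [hs0]⟩
    have hnc : ‖(fun _ : Fin n => ρ)‖ = ρ := by
      rw [pi_norm_const]; exact abs_of_pos hρ
    have h := hds₀.lip 0 (x 0) (x 0 + fun _ => ρ) hmem (by simp [hρ.le])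
      (by rw [add_sub_cancel_left, hnc])
    have h2 : ‖x 0 - (x 0 + fun _ => ρ)‖ = ρ := by
      rw [sub_add_cancel_left, norm_neg, hnc]
    rw [h2] at h
    nlinarith [norm_nonneg (DF₀ (x 0) 0 - DF₀ (x 0 + fun _ => ρ) 0)]
  -- bounds on the Jacobians along the trajectory
  obtain ⟨C₀, hC₀⟩ : ∃ C, ∀ t ∈ Icc (0:ℝ) s, ‖DF₀ (x t) t‖ ≤ C := by
    have hmap : MapsTo (fun t => ((x t, t) : (Fin n → ℝ) × ℝ)) (Icc 0 s)
        {p : (Fin n → ℝ) × ℝ | p.2 ∈ Icc 0 (s+ρ) ∧ ‖p.1 - x p.2‖ ≤ ρ} := by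
      intro t ht
      exact ⟨⟨ht.1, by linarith [ht.2]⟩, by simp [hρ.le]⟩
    exact isCompact_Icc.exists_bound_of_continuousOn
      (hds₀.contDeriv.comp
        ((hxc.mono (Icc_subset_Icc_right hsT.le)).prodMk (continuousOn_id)) hmap)
  obtain ⟨C₁, hC₁⟩ : ∃ C, ∀ t ∈ Icc s T, ‖DF₁ (x t) t‖ ≤ C := by
    have hmap : MapsTo (fun t => ((x t, t) : (Fin n → ℝ) × ℝ)) (Icc s T)
        {p : (Fin n → ℝ) × ℝ | p.2 ∈ Icc (s-ρ) T ∧ ‖p.1 - x p.2‖ ≤ ρ} := by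
      intro t ht
      exact ⟨⟨by linarith [ht.1], ht.2⟩, by simp [hρ.le]⟩
    exact isCompact_Icc.exists_bound_of_continuousOn
      (hds₁.contDeriv.comp
        ((hxc.mono (Icc_subset_Icc hs0.le le_rfl)).prodMk (continuousOn_id)) hmap)
  set M : ℝ := max 1 (max C₀ C₁) with hM
  have hM1 : (1:ℝ) ≤ M := le_max_left _ _
  have hM0 : (0:ℝ) < M := lt_of_lt_of_le one_pos hM1
  set KN : ℝ := ‖LinearMap.toContinuousLinearMap (Matrix.mulVecLin N)‖ with hKN
  have hKN0 : (0:ℝ) ≤ KN := norm_nonneg _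
  refine ⟨2 * L * Real.exp (2*L*T) * Real.exp (2*M*T), ρ / (Real.exp (L*T) * (KN+1)),
    div_pos hρ (mul_pos (Real.exp_pos _) (by linarith)), ?_⟩
  intro π hπ y hyc hy₂ hy₃ hyI hyJ hybd
  set θ : {j // j ∈ Iᶜ} → ℝ := N.mulVec π with hθdef
  have hθle : ‖θ‖ ≤ KN * ‖π‖ := by
    have hrw : θ = LinearMap.toContinuousLinearMap (Matrix.mulVecLin N) π := by
      rw [hθdef]
      simp [LinearMap.coe_toContinuousLinearMap', Matrix.mulVecLin_apply]
    rw [hrw, hKN]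
    exact ContinuousLinearMap.le_opNorm _ _
  have hθρ : Real.exp (L*T) * ‖θ‖ ≤ ρ := by
    have h1 : ‖π‖ * (Real.exp (L*T) * (KN+1)) ≤ ρ := by
      rw [← le_div_iff₀ (by positivity)]; exact hπ
    have h2 : Real.exp (L*T) * ‖θ‖ ≤ Real.exp (L*T) * (KN * ‖π‖) :=
      mul_le_mul_of_nonneg_left hθle (Real.exp_pos _).le
    nlinarith [Real.exp_pos (L*T), norm_nonneg π]
  have htube : ∀ t ∈ Icc (0:ℝ) T, ‖y t - x t‖ ≤ Real.exp (L*T) * ‖θ‖ := by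
    intro t ht
    exact (hybd t ht).trans (mul_le_mul_of_nonneg_right
      (Real.exp_le_exp.2 (mul_le_mul_of_nonneg_left ht.2 hL)) (norm_nonneg _))
  have htubeρ : ∀ t ∈ Icc (0:ℝ) T, ‖y t - x t‖ ≤ ρ := fun t ht => (htube t ht).trans hθρ
  set z0 : Fin n → ℝ := y 0 - x 0 with hz0
  set u : ℝ → Fin n → ℝ := fun t => y t - x t - Φ t z0 with hu
  have hu0 : u 0 = 0 := by simp [hu, hΦ0, hz0]
  set ε₁ : ℝ := L * Real.exp (2*L*T) * ‖θ‖^2 with hε₁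
  have hε₁0 : 0 ≤ ε₁ := by
    rw [hε₁]
    exact mul_nonneg (mul_nonneg hL (Real.exp_pos _).le) (sq_nonneg _)
  -- second-order Taylor remainder estimate
  have key : ∀ (Fd : (Fin n → ℝ) → ℝ → Fin n → ℝ)
      (DFd : (Fin n → ℝ) → ℝ → (Fin n → ℝ) →L[ℝ] (Fin n → ℝ)) (a b : ℝ),
      DynSmooth n Fd DFd x a b ρ L → ∀ t ∈ Icc (0:ℝ) T, t ∈ Icc a b →
      ‖Fd (y t) t - Fd (x t) t - DFd (x t) t (y t - x t)‖ ≤ ε₁ := by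
    intro Fd DFd a b hds t ht hab
    have hrρ : ‖y t - x t‖ ≤ ρ := htubeρ t ht
    have hball : ∀ z ∈ closedBall (x t) ‖y t - x t‖, ‖z - x t‖ ≤ ρ := by
      intro z hz
      rw [mem_closedBall, dist_eq_norm] at hz
      exact hz.trans hrρ
    have hmain : ‖Fd (y t) t - Fd (x t) t - DFd (x t) t (y t - x t)‖
        ≤ (L * ‖y t - x t‖) * ‖y t - x t‖ := by
      refine (convex_closedBall (x t) ‖y t - x t‖).norm_image_sub_le_of_norm_hasFDerivWithin_le'
        (fun z hz => (hds.hasFDeriv z t hab (hball z hz)).hasFDerivWithinAt)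
        (fun z hz => ?_) (mem_closedBall_self (norm_nonneg _)) ?_
      · refine (hds.lip t z (x t) hab (hball z hz) (by simp [hρ.le])).trans ?_
        have hzr : ‖z - x t‖ ≤ ‖y t - x t‖ := by
          rw [← dist_eq_norm]; exact hz
        exact mul_le_mul_of_nonneg_left hzr hL
      · rw [mem_closedBall, dist_eq_norm]
    refine hmain.trans ?_
    have hrb : ‖y t - x t‖ ≤ Real.exp (L*T) * ‖θ‖ := htube t ht
    have hsq : ‖y t - x t‖ * ‖y t - x t‖
        ≤ (Real.exp (L*T) * ‖θ‖) * (Real.exp (L*T) * ‖θ‖) :=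
      mul_le_mul hrb hrb (norm_nonneg _) (by positivity)
    have e2 : Real.exp (L*T) * Real.exp (L*T) = Real.exp (2*L*T) := by
      rw [← Real.exp_add]; ring_nf
    have hsq' : ‖y t - x t‖ * ‖y t - x t‖ ≤ Real.exp (2*L*T) * ‖θ‖^2 := by
      have hrw2 : (Real.exp (L*T) * ‖θ‖) * (Real.exp (L*T) * ‖θ‖)
          = Real.exp (2*L*T) * ‖θ‖^2 := by rw [← e2]; ring
      rw [← hrw2]; exact hsq
    rw [hε₁]
    calc (L * ‖y t - x t‖) * ‖y t - x t‖ = L * (‖y t - x t‖ * ‖y t - x t‖) := by ring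
      _ ≤ L * (Real.exp (2*L*T) * ‖θ‖^2) := mul_le_mul_of_nonneg_left hsq' hL
      _ = L * Real.exp (2*L*T) * ‖θ‖^2 := by ring
  set A : ℝ → (Fin n → ℝ) →L[ℝ] (Fin n → ℝ) :=
    fun t => if t < s then DF₀ (x t) t else DF₁ (x t) t with hA
  set G : (Fin n → ℝ) → ℝ → (Fin n → ℝ) := fun χ t => if t < s then F₀ χ t else F₁ χ t with hG
  set u' : ℝ → Fin n → ℝ := fun t => G (y t) t - G (x t) t - A t (Φ t z0) with hu'
  have hderiv : ∀ t ∈ Icc (0:ℝ) T, t ≠ s → HasDerivWithinAt u (u' t) (Icc 0 T) t := by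
    intro t ht hne
    have hΦ' : HasDerivWithinAt (fun τ => Φ τ z0) (A t (Φ t z0)) (Icc 0 T) t := by
      have h := (hΦode t ht hne).clm_apply (hasDerivWithinAt_const t _ z0)
      simpa [hA] using h
    by_cases hlt : t < s
    · have ht' : t ∈ Ico (0:ℝ) s := ⟨ht.1, hlt⟩
      have h := ((hy₂ t ht').sub (hx₂ t ht')).sub hΦ'
      simp only [hu', hG, if_pos hlt]; exact h
    · have hgt : s < t := lt_of_le_of_ne (not_lt.1 hlt) (Ne.symm hne)
      have ht' : t ∈ Ioc s T := ⟨hgt, ht.2⟩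
      have h := ((hy₃ t ht').sub (hx₃ t ht')).sub hΦ'
      simp only [hu', hG, if_neg hlt]; exact h
  have hAle : ∀ t ∈ Icc (0:ℝ) T, ‖A t‖ ≤ M := by
    intro t ht
    by_cases hlt : t < s
    · have h := hC₀ t ⟨ht.1, hlt.le⟩
      have : A t = DF₀ (x t) t := by simp [hA, if_pos hlt]
      rw [this]
      exact h.trans (le_trans (le_max_left _ _) (le_max_right _ _))
    · have h := hC₁ t ⟨not_lt.1 hlt, ht.2⟩
      have : A t = DF₁ (x t) t := by simp [hA, if_neg hlt]
      rw [this]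
      exact h.trans (le_trans (le_max_right _ _) (le_max_right _ _))
  have hu'bd : ∀ t ∈ Icc (0:ℝ) T, t ≠ s → ‖u' t‖ ≤ M * ‖u t‖ + ε₁ := by
    intro t ht hne
    have hrw : u' t = (G (y t) t - G (x t) t - A t (y t - x t)) + A t (u t) := by
      simp only [hu', hu, map_sub]
      abel
    have hR : ‖G (y t) t - G (x t) t - A t (y t - x t)‖ ≤ ε₁ := by
      by_cases hlt : t < s
      · have h := key F₀ DF₀ 0 (s+ρ) hds₀ t ht ⟨ht.1, by linarith⟩
        simpa [hG, hA, if_pos hlt] using h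
      · have hge : s ≤ t := not_lt.1 hlt
        have h := key F₁ DF₁ (s-ρ) T hds₁ t ht ⟨by linarith, ht.2⟩
        simpa [hG, hA, if_neg hlt] using h
    calc ‖u' t‖ ≤ ‖G (y t) t - G (x t) t - A t (y t - x t)‖ + ‖A t (u t)‖ := by
          rw [hrw]; exact norm_add_le _ _
      _ ≤ ε₁ + M * ‖u t‖ := add_le_add hR (le_trans ((A t).le_opNorm _)
          (mul_le_mul_of_nonneg_right (hAle t ht) (norm_nonneg _)))
      _ = M * ‖u t‖ + ε₁ := by ring
  have hucont : ContinuousOn u (Icc 0 T) :=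
    (hyc.sub hxc).sub (hΦc.clm_apply continuousOn_const)
  -- Grönwall on [0, s]
  have hg1 := norm_le_gronwallBound_of_norm_deriv_right_le (f := u) (f' := u') (δ := 0)
    (K := M) (ε := ε₁) (a := 0) (b := s)
    (hucont.mono (Icc_subset_Icc_right hsT.le))
    (fun t ht => (hderiv t ⟨ht.1, ht.2.le.trans hsT.le⟩ (ne_of_lt ht.2)).mono_of_mem_nhdsWithin
      (Icc_mem_nhdsGE_of_mem ⟨ht.1, ht.2.trans_le hsT.le⟩))
    (by simp [hu0])
    (fun t ht => hu'bd t ⟨ht.1, ht.2.le.trans hsT.le⟩ (ne_of_lt ht.2))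
  -- Grönwall on [σ, T] for σ > s
  have hg2 : ∀ σ ∈ Ioc s T, ‖u T‖ ≤ gronwallBound ‖u σ‖ M ε₁ (T - σ) := by
    intro σ hσ
    have h := norm_le_gronwallBound_of_norm_deriv_right_le (f := u) (f' := u') (δ := ‖u σ‖)
      (K := M) (ε := ε₁) (a := σ) (b := T)
      (hucont.mono (Icc_subset_Icc (by linarith [hσ.1]) le_rfl))
      (fun t ht => (hderiv t ⟨by linarith [ht.1, hσ.1], ht.2.le⟩
          (ne_of_gt (lt_of_lt_of_le hσ.1 ht.1))).mono_of_mem_nhdsWithin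
        (Icc_mem_nhdsGE_of_mem ⟨by linarith [ht.1, hσ.1], ht.2⟩))
      le_rfl
      (fun t ht => hu'bd t ⟨by linarith [ht.1, hσ.1], ht.2.le⟩
        (ne_of_gt (lt_of_lt_of_le hσ.1 ht.1)))
    exact h T ⟨hσ.2, le_rfl⟩
  have hMne : M ≠ 0 := ne_of_gt hM0
  have hgb : ∀ δ w : ℝ, gronwallBound δ M ε₁ w
      = δ * Real.exp (M*w) + ε₁/M * (Real.exp (M*w) - 1) := by
    intro δ w; rw [gronwallBound_of_K_ne_0 hMne]
  set g : ℝ → ℝ := fun σ => ‖u σ‖ * Real.exp (M*(T-σ)) + ε₁/M * (Real.exp (M*(T-σ)) - 1)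
    with hgdef
  have hevent : ∀ᶠ σ in nhdsWithin s (Ioi s), ‖u T‖ ≤ g σ := by
    filter_upwards [Ioc_mem_nhdsGT hsT] with σ hσ
    have h := hg2 σ hσ
    rwa [hgb] at h
  have htend : Filter.Tendsto g (nhdsWithin s (Ioi s)) (nhds (g s)) := by
    have h1 : Filter.Tendsto (fun σ => ‖u σ‖) (nhdsWithin s (Ioi s)) (nhds ‖u s‖) := by
      have hc : ContinuousWithinAt (fun σ => ‖u σ‖) (Icc 0 T) s :=
        (continuous_norm.comp_continuousOn hucont) s ⟨hs0.le, hsT.le⟩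
      refine hc.mono_left ?_
      rw [← nhdsWithin_Ioc_eq_nhdsGT hsT]
      exact nhdsWithin_mono _ (Ioc_subset_Icc_self.trans (Icc_subset_Icc hs0.le le_rfl))
    have h2 : Filter.Tendsto (fun σ : ℝ => Real.exp (M*(T-σ))) (nhdsWithin s (Ioi s))
        (nhds (Real.exp (M*(T-s)))) := by
      exact ((Real.continuous_exp.comp
        (continuous_const.mul (continuous_const.sub continuous_id))).tendsto s).mono_left
        nhdsWithin_le_nhds
    exact (h1.mul h2).add ((h2.sub tendsto_const_nhds).const_mul _)
  have hus : ‖u T‖ ≤ g s := ge_of_tendsto htend hevent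
  have hB1 : ‖u s‖ ≤ gronwallBound 0 M ε₁ s := by
    have h := hg1 s ⟨hs0.le, le_rfl⟩
    simpa using h
  have hB1' : ‖u s‖ ≤ ε₁ * Real.exp (M*T) := by
    refine hB1.trans ?_
    rw [hgb]
    have h1 : ε₁/M ≤ ε₁ := div_le_self hε₁0 hM1
    have h2 : Real.exp (M*s) ≤ Real.exp (M*T) :=
      Real.exp_le_exp.2 (mul_le_mul_of_nonneg_left hsT.le hM0.le)
    have h3 : (1:ℝ) ≤ Real.exp (M*s) := Real.one_le_exp (mul_nonneg hM0.le hs0.le)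
    have h4 : (0:ℝ) * Real.exp (M*s) + ε₁/M * (Real.exp (M*s) - 1)
        = ε₁/M * (Real.exp (M*s) - 1) := by ring
    rw [h4]
    calc ε₁/M * (Real.exp (M*s) - 1) ≤ ε₁ * (Real.exp (M*s) - 1) :=
        mul_le_mul_of_nonneg_right h1 (by linarith)
      _ ≤ ε₁ * Real.exp (M*T) := mul_le_mul_of_nonneg_left (by linarith) hε₁0
  have hfinal : ‖u T‖ ≤ 2 * L * Real.exp (2*L*T) * Real.exp (2*M*T) * ‖θ‖^2 := by
    have e1 : Real.exp (M*(T-s)) ≤ Real.exp (M*T) :=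
      Real.exp_le_exp.2 (by nlinarith [mul_nonneg hM0.le hs0.le])
    have e2 : Real.exp (M*T) * Real.exp (M*T) = Real.exp (2*M*T) := by
      rw [← Real.exp_add]; ring_nf
    have e3 : (1:ℝ) ≤ Real.exp (M*T) :=
      Real.one_le_exp (mul_nonneg hM0.le (by linarith))
    have e4 : (1:ℝ) ≤ Real.exp (M*(T-s)) :=
      Real.one_le_exp (mul_nonneg hM0.le (by linarith))
    have h1 : ε₁/M ≤ ε₁ := div_le_self hε₁0 hM1
    have hgs : g s = ‖u s‖ * Real.exp (M*(T-s)) + ε₁/M * (Real.exp (M*(T-s)) - 1) := by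
      rw [hgdef]
    have t1 : ‖u s‖ * Real.exp (M*(T-s)) ≤ ε₁ * Real.exp (2*M*T) := by
      calc ‖u s‖ * Real.exp (M*(T-s)) ≤ (ε₁ * Real.exp (M*T)) * Real.exp (M*(T-s)) :=
            mul_le_mul_of_nonneg_right hB1' (Real.exp_pos _).le
        _ ≤ (ε₁ * Real.exp (M*T)) * Real.exp (M*T) :=
            mul_le_mul_of_nonneg_left e1 (mul_nonneg hε₁0 (Real.exp_pos _).le)
        _ = ε₁ * Real.exp (2*M*T) := by rw [mul_assoc, e2]
    have t2 : ε₁/M * (Real.exp (M*(T-s)) - 1) ≤ ε₁ * Real.exp (2*M*T) := by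
      have hstep : Real.exp (M*(T-s)) - 1 ≤ Real.exp (2*M*T) := by
        nlinarith [Real.exp_pos (M*T)]
      calc ε₁/M * (Real.exp (M*(T-s)) - 1) ≤ ε₁ * (Real.exp (M*(T-s)) - 1) :=
            mul_le_mul_of_nonneg_right h1 (by linarith)
        _ ≤ ε₁ * Real.exp (2*M*T) := mul_le_mul_of_nonneg_left hstep hε₁0
    have hεrw : 2 * L * Real.exp (2*L*T) * Real.exp (2*M*T) * ‖θ‖^2
        = 2 * ε₁ * Real.exp (2*M*T) := by rw [hε₁]; ring
    rw [hεrw]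
    calc ‖u T‖ ≤ g s := hus
      _ = ‖u s‖ * Real.exp (M*(T-s)) + ε₁/M * (Real.exp (M*(T-s)) - 1) := hgs
      _ ≤ ε₁ * Real.exp (2*M*T) + ε₁ * Real.exp (2*M*T) := add_le_add t1 t2
      _ = 2 * ε₁ * Real.exp (2*M*T) := by ring
  -- the linear part hits the perturbed terminal condition exactly
  have hz0I : ∀ i ∈ I, z0 i = 0 := by
    intro i hi
    simp [hz0, hyI i hi, hxI i hi]
  have hz0J : ∀ j : {j // j ∈ Iᶜ}, z0 j.1 = θ j := by
    intro j
    simp [hz0, hyJ j]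
  set Mm : Matrix (Fin n) (Fin n) ℝ :=
    LinearMap.toMatrix' ((Φ T : (Fin n → ℝ) →ₗ[ℝ] (Fin n → ℝ))) with hMm
  have hΦapp : ∀ v : Fin n → ℝ, (Φ T) v = Mm.mulVec v := by
    intro v
    have h := Matrix.toLin'_toMatrix' ((Φ T : (Fin n → ℝ) →ₗ[ℝ] (Fin n → ℝ)))
    calc (Φ T) v = Matrix.toLin' Mm v := by rw [hMm, h]; rfl
      _ = Mm.mulVec v := Matrix.toLin'_apply _ _
  have hπe : ∀ e : {e // e ∈ E}, (Φ T) z0 e.1 = π e := by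
    intro e
    have hsum : (Φ T) z0 e.1 = ∑ k : Fin n, Mm e.1 k * z0 k := by
      rw [hΦapp]
      simp [Matrix.mulVec, dotProduct]
    have hsplit : ∑ k : Fin n, Mm e.1 k * z0 k = ∑ k ∈ Iᶜ, Mm e.1 k * z0 k := by
      rw [← Finset.sum_add_sum_compl I (fun k => Mm e.1 k * z0 k)]
      have hzero : ∑ k ∈ I, Mm e.1 k * z0 k = 0 :=
        Finset.sum_eq_zero (fun k hk => by rw [hz0I k hk, mul_zero])
      rw [hzero, zero_add]
    have hsub : ∑ k ∈ Iᶜ, Mm e.1 k * z0 k = ∑ j : {j // j ∈ Iᶜ}, Mm e.1 j.1 * θ j := by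
      rw [← Finset.sum_coe_sort (Iᶜ) (fun k => Mm e.1 k * z0 k)]
      exact Finset.sum_congr rfl (fun j _ => by rw [hz0J j])
    have hπeq : π e = ∑ j : {j // j ∈ Iᶜ}, Mm e.1 j.1 * θ j := by
      have h2 : (Mm.submatrix (Subtype.val : {e // e ∈ E} → Fin n)
          (Subtype.val : {j // j ∈ Iᶜ} → Fin n)).mulVec θ = π := by
        rw [hθdef, Matrix.mulVec_mulVec, hN₁, Matrix.one_mulVec]
      calc π e = ((Mm.submatrix (Subtype.val : {e // e ∈ E} → Fin n)
            (Subtype.val : {j // j ∈ Iᶜ} → Fin n)).mulVec θ) e := by rw [h2]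
        _ = ∑ j : {j // j ∈ Iᶜ}, Mm e.1 j.1 * θ j := by
            simp [Matrix.mulVec, dotProduct, Matrix.submatrix_apply]
    rw [hsum, hsplit, hsub]
    exact hπeq.symm
  have hfun : (fun e : {e // e ∈ E} => y T e.1 - bE e.1 - π e)
      = fun e : {e // e ∈ E} => u T e.1 := by
    funext e
    have hxT : x T e.1 = bE e.1 := by
      have h := hxE e
      simpa using h
    have hue : u T e.1 = y T e.1 - x T e.1 - (Φ T) z0 e.1 := by simp [hu]
    rw [hue, hxT, hπe e]
  rw [hfun]
  calc ‖(fun e : {e // e ∈ E} => u T e.1)‖ ≤ ‖u T‖ :=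
      (pi_norm_le_iff_of_nonneg (norm_nonneg _)).2 (fun e => norm_le_pi_norm (u T) e.1)
    _ ≤ 2 * L * Real.exp (2*L*T) * Real.exp (2*M*T) * ‖θ‖^2 := hfinal
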